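/- Let μ be a positive measure on ℝ^n whose monomial moments up to degree 2k are finite, let f be a real polynomial in n variables of degree at most 2k, let λ̲, λ ∈ ℝ with λ̲ ≤ λ, and let G be a positive semidefinite real symmetric matrix indexed by ℕ^n_k such that f(x) − λ = v_k(x)ᵀ G v_k(x) for all x ∈ ℝ^n, where v_k(x) = (x^α)_{α∈ℕ^n_k}. If λ_min(M_k(μ)) > 0 and ∫(f − λ̲) dμ ≤ λ_min(M_k(μ)), then tr(G) ≤ 1. -/

import Mathlib

open Matrix BigOperators MeasureTheory

/-- The set `ℕ^n_k` of multi-indices `α ∈ ℕ^n` with `|α| = α₁ + ⋯ + αₙ ≤ k`. -/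
abbrev MIdx (n k : ℕ) : Type := {α : Fin n → ℕ // ∑ i, α i ≤ k}

noncomputable instance (n k : ℕ) : Fintype (MIdx n k) :=
  Fintype.ofInjective
    (fun a : MIdx n k => fun i : Fin n =>
      (⟨a.1 i, Nat.lt_succ_of_le
        ((Finset.single_le_sum (fun j _ => Nat.zero_le (a.1 j)) (Finset.mem_univ i)).trans
          a.2)⟩ : Fin (k + 1)))
    (fun a b h => Subtype.ext (funext fun i => congrArg Fin.val (congrFun h i)))

/-- The smallest eigenvalue of a real symmetric matrix, expressed as the infimum of the
Rayleigh quotient over the unit sphere (Courant–Fischer). -/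
noncomputable def eigMin {m : Type} [Fintype m] (A : Matrix m m ℝ) : ℝ :=
  ⨅ v : {v : m → ℝ // v ⬝ᵥ v = 1}, v.1 ⬝ᵥ A.mulVec v.1

/-- The moment matrix `M_k(μ)` of a measure `μ` on `ℝ^n`: the matrix indexed by `ℕ^n_k`
with `(α,β)` entry `∫ x^{α+β} dμ`. -/
noncomputable def momentMatrix (n k : ℕ) (μ : Measure (Fin n → ℝ)) :
    Matrix (MIdx n k) (MIdx n k) ℝ :=
  Matrix.of fun α β => ∫ x, ∏ i, x i ^ (α.1 i + β.1 i) ∂μ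

lemma trace_nonneg_of_psd {m : Type*} [Fintype m] {A : Matrix m m ℝ}
    (hA : A.PosSemidef) : 0 ≤ A.trace := by
  classical
  refine Finset.sum_nonneg fun i _ => ?_
  simpa using hA.dotProduct_mulVec_nonneg (Pi.single i 1)

lemma trace_mul_psd_nonneg {m : Type*} [Fintype m] [DecidableEq m] {A B : Matrix m m ℝ}
    (hA : A.PosSemidef) (hB : B.PosSemidef) : 0 ≤ (A * B).trace := by
  obtain ⟨C, hC, -, hAC⟩ := open scoped MatrixOrder in
    CFC.exists_sqrt_of_isSelfAdjoint_of_quasispectrumRestricts hA.isHermitian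
      (QuasispectrumRestricts.nnreal_of_nonneg hA.nonneg)
  subst hAC
  have hCC : Cᴴ = C := hC
  nth_rewrite 1 [← hCC]
  have h := hB.mul_mul_conjTranspose_same C
  have := trace_nonneg_of_psd h
  rwa [Matrix.trace_mul_cycle C B Cᴴ] at this

lemma eigMin_le_rayleigh {m : Type} [Fintype m] (A : Matrix m m ℝ) (v : m → ℝ)
    (hv : v ⬝ᵥ v = 1) : eigMin A ≤ v ⬝ᵥ A.mulVec v := by
  classical
  set C : ℝ := ∑ i, ∑ j, |A i j| with hC
  have key : ∀ u : m → ℝ, u ⬝ᵥ u = 1 → |u ⬝ᵥ A.mulVec u| ≤ C := by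
    intro u hu
    have habs : ∀ i, |u i| ≤ 1 := by
      intro i
      rw [abs_le_one_iff_mul_self_le_one]
      calc u i * u i ≤ ∑ j, u j * u j :=
            Finset.single_le_sum (fun j _ => mul_self_nonneg (u j)) (Finset.mem_univ i)
        _ = 1 := hu
    have hrw : u ⬝ᵥ A.mulVec u = ∑ i, ∑ j, u i * (A i j * u j) := by
      simp [dotProduct, mulVec, Finset.mul_sum]
    rw [hrw]
    calc |∑ i, ∑ j, u i * (A i j * u j)| ≤ ∑ i, |∑ j, u i * (A i j * u j)| :=
          Finset.abs_sum_le_sum_abs _ _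
      _ ≤ ∑ i, ∑ j, |u i * (A i j * u j)| :=
          Finset.sum_le_sum fun i _ => Finset.abs_sum_le_sum_abs _ _
      _ ≤ ∑ i, ∑ j, |A i j| := by
          refine Finset.sum_le_sum fun i _ => Finset.sum_le_sum fun j _ => ?_
          rw [abs_mul, abs_mul]
          calc |u i| * (|A i j| * |u j|) ≤ 1 * (|A i j| * 1) := by
                apply mul_le_mul (habs i) _ (by positivity) zero_le_one
                exact mul_le_mul_of_nonneg_left (habs j) (abs_nonneg _)
            _ = |A i j| := by ring
  have hbdd : BddBelow (Set.range fun v : {v : m → ℝ // v ⬝ᵥ v = 1} =>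
      v.1 ⬝ᵥ A.mulVec v.1) := by
    refine ⟨-C, ?_⟩
    rintro y ⟨u, rfl⟩
    exact neg_le_of_abs_le (key u.1 u.2)
  exact ciInf_le hbdd ⟨v, hv⟩

lemma sub_smul_one_psd {m : Type} [Fintype m] [DecidableEq m] (A : Matrix m m ℝ)
    (hA : A.IsHermitian) (c : ℝ) (hc : ∀ v : m → ℝ, v ⬝ᵥ v = 1 → c ≤ v ⬝ᵥ A.mulVec v) :
    (A - c • (1 : Matrix m m ℝ)).PosSemidef := by
  refine Matrix.PosSemidef.of_dotProduct_mulVec_nonneg ?_ ?_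
  · refine hA.sub ?_
    ext i j
    simp only [conjTranspose_apply, Matrix.smul_apply, Matrix.one_apply, star_trivial]
    by_cases h : i = j <;> simp [h, eq_comm]
  · intro v
    rcases eq_or_ne v 0 with rfl | hv0
    · simp
    have hnn : (0:ℝ) ≤ v ⬝ᵥ v := Finset.sum_nonneg fun i _ => mul_self_nonneg (v i)
    have hvv : 0 < v ⬝ᵥ v :=
      lt_of_le_of_ne hnn (fun h => hv0 (dotProduct_self_eq_zero.mp h.symm))
    set s : ℝ := Real.sqrt (v ⬝ᵥ v) with hs
    have hspos : 0 < s := Real.sqrt_pos.mpr hvv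
    have hs2 : s * s = v ⬝ᵥ v := Real.mul_self_sqrt hnn
    set u : m → ℝ := s⁻¹ • v with hu
    have huu : u ⬝ᵥ u = 1 := by
      rw [hu, smul_dotProduct, dotProduct_smul, smul_eq_mul, smul_eq_mul, ← mul_assoc,
        ← mul_inv, hs2]
      field_simp
    have hval : u ⬝ᵥ A.mulVec u = (v ⬝ᵥ v)⁻¹ * (v ⬝ᵥ A.mulVec v) := by
      rw [hu, Matrix.mulVec_smul, smul_dotProduct, dotProduct_smul, smul_eq_mul, smul_eq_mul,
        ← mul_assoc, ← mul_inv, hs2]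
    have h1 : c ≤ (v ⬝ᵥ v)⁻¹ * (v ⬝ᵥ A.mulVec v) := hval ▸ hc u huu
    have h2 : c * (v ⬝ᵥ v) ≤ v ⬝ᵥ A.mulVec v := by
      rw [mul_comm]
      exact (le_inv_mul_iff₀ hvv).mp h1
    have hrw : star v ⬝ᵥ (A - c • (1 : Matrix m m ℝ)).mulVec v
        = v ⬝ᵥ A.mulVec v - c * (v ⬝ᵥ v) := by
      simp [Matrix.sub_mulVec, Matrix.smul_mulVec, dotProduct_sub, dotProduct_smul,
        smul_eq_mul]
    rw [hrw]
    linarith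

/-- If `f − λ = v_kᵀ G v_k` with `G ⪰ 0`, `λ̲ ≤ λ`,
`λ_min(M_k(μ)) > 0` and `∫ (f − λ̲) dμ ≤ λ_min(M_k(μ))`, then `tr(G) ≤ 1`. -/
theorem stmt8 (n k : ℕ) (μ : Measure (Fin n → ℝ))
    (hmom : ∀ γ : Fin n → ℕ, (∑ i, γ i) ≤ 2 * k →
      Integrable (fun x => ∏ i, x i ^ γ i) μ)
    (f : MIdx n (2 * k) → ℝ) (lamL lam : ℝ) (hll : lamL ≤ lam)
    (G : Matrix (MIdx n k) (MIdx n k) ℝ) (hG : G.PosSemidef)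
    (hrep : ∀ x : Fin n → ℝ,
      (∑ γ : MIdx n (2 * k), f γ * ∏ i, x i ^ γ.1 i) - lam
        = (fun α : MIdx n k => ∏ i, x i ^ α.1 i) ⬝ᵥ
            G.mulVec (fun α : MIdx n k => ∏ i, x i ^ α.1 i))
    (hpos : 0 < eigMin (momentMatrix n k μ))
    (hint : (∫ x, ((∑ γ : MIdx n (2 * k), f γ * ∏ i, x i ^ γ.1 i) - lamL) ∂μ)
      ≤ eigMin (momentMatrix n k μ)) :
    G.trace ≤ 1 := by
  classical
  set M := momentMatrix n k μ with hM
  set lm := eigMin M with hlm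
  set P : (Fin n → ℝ) → ℝ := fun x => ∑ γ : MIdx n (2 * k), f γ * ∏ i, x i ^ γ.1 i with hP
  -- μ is a finite measure
  have h1int : Integrable (fun _ : Fin n → ℝ => (1:ℝ)) μ := by
    simpa using hmom (fun _ => 0) (by simp)
  have hμfin : IsFiniteMeasure μ := by
    rcases (integrable_const_iff.mp h1int) with h | h
    · exact absurd h one_ne_zero
    · exact h
  -- integrability of P
  have hPint : Integrable P μ := by
    apply integrable_finset_sum
    intro γ _
    exact (hmom γ.1 γ.2).const_mul (f γ)
  -- integrability of pair monomials
  have hpair : ∀ α β : MIdx n k, Integrable (fun x => ∏ i, x i ^ (α.1 i + β.1 i)) μ := by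
    intro α β
    apply hmom
    calc ∑ i, (α.1 i + β.1 i) = (∑ i, α.1 i) + ∑ i, β.1 i := Finset.sum_add_distrib
      _ ≤ k + k := add_le_add α.2 β.2
      _ = 2 * k := (two_mul k).symm
  -- pointwise expansion of the quadratic form
  have hquad : ∀ x : Fin n → ℝ,
      (fun α : MIdx n k => ∏ i, x i ^ α.1 i) ⬝ᵥ
        G.mulVec (fun α : MIdx n k => ∏ i, x i ^ α.1 i)
      = ∑ α : MIdx n k, ∑ β : MIdx n k, G α β * ∏ i, x i ^ (α.1 i + β.1 i) := by
    intro x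
    simp only [dotProduct, mulVec, Finset.mul_sum]
    refine Finset.sum_congr rfl fun α _ => Finset.sum_congr rfl fun β _ => ?_
    have : (∏ i, x i ^ (α.1 i + β.1 i)) = (∏ i, x i ^ α.1 i) * ∏ i, x i ^ β.1 i := by
      rw [← Finset.prod_mul_distrib]
      exact Finset.prod_congr rfl fun i _ => pow_add _ _ _
    rw [this]; ring
  -- the integral of the quadratic form
  have hSint : ∫ x, ((fun α : MIdx n k => ∏ i, x i ^ α.1 i) ⬝ᵥ
        G.mulVec (fun α : MIdx n k => ∏ i, x i ^ α.1 i)) ∂μ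
      = ∑ α : MIdx n k, ∑ β : MIdx n k, G α β * M α β := by
    simp only [hquad]
    rw [integral_finset_sum _ (fun α _ => integrable_finset_sum _
      (fun β _ => ((hpair α β).const_mul (G α β))))]
    refine Finset.sum_congr rfl fun α _ => ?_
    rw [integral_finset_sum _ (fun β _ => ((hpair α β).const_mul (G α β)))]
    refine Finset.sum_congr rfl fun β _ => ?_
    rw [MeasureTheory.integral_const_mul]
    rfl
  have hint1 : ∫ x, (P x - lam) ∂μ
      = ∑ α : MIdx n k, ∑ β : MIdx n k, G α β * M α β := by
    rw [← hSint]
    exact integral_congr_ae (Filter.Eventually.of_forall fun x => hrep x)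
  -- monotonicity in the constant
  have hmono : ∫ x, (P x - lam) ∂μ ≤ ∫ x, (P x - lamL) ∂μ := by
    apply integral_mono (hPint.sub (integrable_const lam)) (hPint.sub (integrable_const lamL))
    intro x
    exact sub_le_sub_left hll _
  -- M is hermitian
  have hMsym : M.IsHermitian := by
    ext α β
    simp only [conjTranspose_apply, star_trivial, hM, momentMatrix, Matrix.of_apply]
    simp [add_comm]
  -- M - lm • 1 is psd
  have hB : (M - lm • (1 : Matrix (MIdx n k) (MIdx n k) ℝ)).PosSemidef :=
    sub_smul_one_psd M hMsym lm (fun v hv => eigMin_le_rayleigh M v hv)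
  -- the sum is the trace of G * M
  have hStr : ∑ α : MIdx n k, ∑ β : MIdx n k, G α β * M α β = (G * M).trace := by
    simp only [Matrix.trace, Matrix.diag, Matrix.mul_apply]
    refine Finset.sum_congr rfl fun α _ => Finset.sum_congr rfl fun β _ => ?_
    congr 1
    exact congrFun (congrFun hMsym.symm α) β ▸ rfl
  -- key inequality
  have hkey : lm * G.trace ≤ (G * M).trace := by
    have h0 : 0 ≤ (G * (M - lm • (1 : Matrix (MIdx n k) (MIdx n k) ℝ))).trace :=
      trace_mul_psd_nonneg hG hB
    have hexp : (G * (M - lm • (1 : Matrix (MIdx n k) (MIdx n k) ℝ))).trace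
        = (G * M).trace - lm * G.trace := by
      rw [Matrix.mul_sub, Matrix.trace_sub, Matrix.mul_smul, Matrix.mul_one,
        Matrix.trace_smul, smul_eq_mul]
    linarith [hexp ▸ h0]
  have hchain : lm * G.trace ≤ lm := by
    calc lm * G.trace ≤ (G * M).trace := hkey
      _ = ∫ x, (P x - lam) ∂μ := by rw [hint1, hStr]
      _ ≤ ∫ x, (P x - lamL) ∂μ := hmono
      _ ≤ lm := hint
  exact le_of_mul_le_mul_left (by rw [mul_one]; exact hchain) hpos
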